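/- Let Σ be a K×K real symmetric matrix with Σ ⪰ λI for some λ > 0, and let Δ be a K×K real symmetric matrix with operator norm ‖Δ‖ ≤ λ/2. Then Σ + Δ is invertible and the second-order Neumann remainder satisfies ‖(Σ + Δ)^{−1} − Σ^{−1} + Σ^{−1} Δ Σ^{−1}‖ ≤ 2‖Δ‖² / λ³, where ‖·‖ denotes the spectral (operator) norm. -/

import Mathlib

open scoped Matrix.Norms.L2Operator
open Matrix RealInnerProductSpace

lemma aux_inv_bound {K : ℕ} (A : Matrix (Fin K) (Fin K) ℝ) (μ : ℝ) (hμ : 0 < μ)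
    (h : ∀ x : EuclideanSpace ℝ (Fin K),
      μ * ‖x‖ ^ 2 ≤ (WithLp.equiv 2 _ x) ⬝ᵥ A *ᵥ (WithLp.equiv 2 _ x)) :
    IsUnit A ∧ ‖A⁻¹‖ ≤ 1 / μ := by
  have lower : ∀ x : EuclideanSpace ℝ (Fin K),
      μ * ‖x‖ ≤ ‖(WithLp.equiv 2 ((Fin K) → ℝ)).symm (A *ᵥ (WithLp.equiv 2 _ x))‖ := by
    intro x
    rcases eq_or_ne x 0 with rfl | hx
    · simp
    have hxn : 0 < ‖x‖ := norm_pos_iff.mpr hx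
    have h1 : μ * ‖x‖ ^ 2
        ≤ (inner ℝ x ((WithLp.equiv 2 ((Fin K) → ℝ)).symm (A *ᵥ (WithLp.equiv 2 _ x))) : ℝ) := by
      rw [EuclideanSpace.inner_eq_star_dotProduct]
      simpa [dotProduct_comm] using h x
    have h2 := real_inner_le_norm x ((WithLp.equiv 2 ((Fin K) → ℝ)).symm (A *ᵥ (WithLp.equiv 2 _ x)))
    nlinarith [norm_nonneg ((WithLp.equiv 2 ((Fin K) → ℝ)).symm (A *ᵥ (WithLp.equiv 2 _ x)))]
  have hinj : Function.Injective (A.mulVec) := by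
    intro x y hxy
    have hz : A *ᵥ (x - y) = 0 := by rw [Matrix.mulVec_sub, hxy, sub_self]
    have hl := lower ((WithLp.equiv 2 ((Fin K) → ℝ)).symm (x - y))
    have hz0 : ((WithLp.equiv 2 ((Fin K) → ℝ)).symm (0 : (Fin K) → ℝ)) = 0 := rfl
    simp only [Equiv.apply_symm_apply, hz, hz0, norm_zero] at hl
    have h0 : ‖(WithLp.equiv 2 ((Fin K) → ℝ)).symm (x - y)‖ = 0 := by
      nlinarith [norm_nonneg ((WithLp.equiv 2 ((Fin K) → ℝ)).symm (x - y))]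
    have h0' := norm_eq_zero.mp h0
    have : x - y = 0 := by simpa using congrArg (WithLp.equiv 2 ((Fin K) → ℝ)) h0'
    exact sub_eq_zero.mp this
  have hA : IsUnit A := Matrix.mulVec_injective_iff_isUnit.mp hinj
  refine ⟨hA, ?_⟩
  have hdet : IsUnit A.det := (Matrix.isUnit_iff_isUnit_det A).mp hA
  rw [Matrix.l2_opNorm_def]
  apply ContinuousLinearMap.opNorm_le_bound _ (by positivity)
  intro y
  have happ : ((Matrix.toEuclideanLin.trans LinearMap.toContinuousLinearMap) A⁻¹) y
      = (WithLp.equiv 2 ((Fin K) → ℝ)).symm (A⁻¹ *ᵥ (WithLp.equiv 2 _ y)) := rfl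
  rw [happ]
  set x : EuclideanSpace ℝ (Fin K) :=
    (WithLp.equiv 2 ((Fin K) → ℝ)).symm (A⁻¹ *ᵥ (WithLp.equiv 2 _ y)) with hxdef
  have hAx : A *ᵥ (WithLp.equiv 2 _ x) = WithLp.equiv 2 _ y := by
    rw [hxdef]
    simp only [Equiv.apply_symm_apply]
    rw [Matrix.mulVec_mulVec, Matrix.mul_nonsing_inv A hdet, Matrix.one_mulVec]
  have hl := lower x
  rw [hAx] at hl
  have hmy : μ * ‖x‖ ≤ ‖y‖ := by simpa using hl
  rw [div_mul_eq_mul_div, le_div_iff₀ hμ]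
  linarith

/-- second-order Neumann remainder bound for the inverse of a perturbed
symmetric matrix `Σ + Δ`, where `Σ ⪰ λI` and `‖Δ‖ ≤ λ/2` in the spectral norm. -/
theorem neumann_remainder (K : ℕ) (S Δ : Matrix (Fin K) (Fin K) ℝ)
    (hS : S.IsSymm) (hΔ : Δ.IsSymm)
    (lam : ℝ) (hlam : 0 < lam) (hpos : (S - lam • (1 : Matrix (Fin K) (Fin K) ℝ)).PosSemidef)
    (hΔn : ‖Δ‖ ≤ lam / 2) :
    IsUnit (S + Δ) ∧
    ‖(S + Δ)⁻¹ - S⁻¹ + S⁻¹ * Δ * S⁻¹‖ ≤ 2 * ‖Δ‖ ^ 2 / lam ^ 3 := by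
  have hΔnn : (0 : ℝ) ≤ ‖Δ‖ := norm_nonneg _
  have hxx : ∀ x : EuclideanSpace ℝ (Fin K),
      (WithLp.equiv 2 ((Fin K) → ℝ) x) ⬝ᵥ (WithLp.equiv 2 _ x) = ‖x‖ ^ 2 := by
    intro x
    have := real_inner_self_eq_norm_sq x
    rw [EuclideanSpace.inner_eq_star_dotProduct] at this
    simpa using this
  have hSq : ∀ x : EuclideanSpace ℝ (Fin K),
      lam * ‖x‖ ^ 2 ≤ (WithLp.equiv 2 _ x) ⬝ᵥ S *ᵥ (WithLp.equiv 2 _ x) := by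
    intro x
    have h0 := hpos.dotProduct_mulVec_nonneg (WithLp.equiv 2 _ x)
    rw [Matrix.sub_mulVec, Matrix.smul_mulVec, Matrix.one_mulVec, star_trivial,
      dotProduct_sub, dotProduct_smul] at h0
    rw [hxx x] at h0
    simp only [smul_eq_mul] at h0
    linarith
  have hΔq : ∀ x : EuclideanSpace ℝ (Fin K),
      |(WithLp.equiv 2 ((Fin K) → ℝ) x) ⬝ᵥ Δ *ᵥ (WithLp.equiv 2 _ x)| ≤ ‖Δ‖ * ‖x‖ ^ 2 := by
    intro x
    have h1 : (WithLp.equiv 2 ((Fin K) → ℝ) x) ⬝ᵥ Δ *ᵥ (WithLp.equiv 2 _ x)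
        = (inner ℝ x ((WithLp.equiv 2 ((Fin K) → ℝ)).symm (Δ *ᵥ (WithLp.equiv 2 _ x))) : ℝ) := by
      rw [EuclideanSpace.inner_eq_star_dotProduct]; simp [dotProduct_comm]
    rw [h1]
    have h2 := abs_real_inner_le_norm x
      ((WithLp.equiv 2 ((Fin K) → ℝ)).symm (Δ *ᵥ (WithLp.equiv 2 _ x)))
    have h3 := Matrix.l2_opNorm_mulVec Δ x
    have h4 : ((EuclideanSpace.equiv (Fin K) ℝ).symm (Δ *ᵥ x))
        = ((WithLp.equiv 2 ((Fin K) → ℝ)).symm (Δ *ᵥ (WithLp.equiv 2 _ x))) := rfl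
    rw [h4] at h3
    nlinarith [norm_nonneg x,
      norm_nonneg ((WithLp.equiv 2 ((Fin K) → ℝ)).symm (Δ *ᵥ (WithLp.equiv 2 _ x)))]
  obtain ⟨hSu, hSn⟩ := aux_inv_bound S lam hlam hSq
  have hTq : ∀ x : EuclideanSpace ℝ (Fin K),
      lam / 2 * ‖x‖ ^ 2 ≤ (WithLp.equiv 2 _ x) ⬝ᵥ (S + Δ) *ᵥ (WithLp.equiv 2 _ x) := by
    intro x
    rw [Matrix.add_mulVec, dotProduct_add]
    have := hSq x
    have h2 := abs_le.mp (hΔq x)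
    have hx2 : (0:ℝ) ≤ ‖x‖ ^ 2 := sq_nonneg _
    nlinarith
  obtain ⟨hTu, hTn⟩ := aux_inv_bound (S + Δ) (lam / 2) (by linarith) hTq
  refine ⟨hTu, ?_⟩
  have hSdet : IsUnit S.det := (Matrix.isUnit_iff_isUnit_det S).mp hSu
  have hTdet : IsUnit (S + Δ).det := (Matrix.isUnit_iff_isUnit_det _).mp hTu
  set X := (S + Δ)⁻¹ with hX
  set Y := S⁻¹ with hY
  have h1 : (S + Δ) * X = 1 := Matrix.mul_nonsing_inv _ hTdet
  have h1' : X * (S + Δ) = 1 := Matrix.nonsing_inv_mul _ hTdet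
  have h2 : S * Y = 1 := Matrix.mul_nonsing_inv _ hSdet
  have key : X - Y + Y * Δ * Y = X * Δ * Y * Δ * Y := by
    have cancel : ∀ M N : Matrix (Fin K) (Fin K) ℝ, (S + Δ) * M = (S + Δ) * N → M = N := by
      intro M N hMN
      have := congrArg (fun Z => X * Z) hMN
      simpa only [← mul_assoc, h1', one_mul] using this
    apply cancel
    have e1 : (S + Δ) * (X - Y + Y * Δ * Y)
        = (S + Δ) * X - S * Y - Δ * Y + (S * Y) * Δ * Y + Δ * Y * Δ * Y := by noncomm_ring
    have e2 : (S + Δ) * (X * Δ * Y * Δ * Y) = ((S + Δ) * X) * Δ * Y * Δ * Y := by noncomm_ring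
    rw [e1, e2, h1, h2]
    noncomm_ring
  rw [key]
  have hXn : ‖X‖ ≤ 2 / lam := by
    have : 1 / (lam / 2) = 2 / lam := by field_simp
    linarith [hTn, this ▸ hTn]
  have hYn : ‖Y‖ ≤ 1 / lam := hSn
  calc ‖X * Δ * Y * Δ * Y‖ ≤ ‖X * Δ * Y * Δ‖ * ‖Y‖ := norm_mul_le _ _
    _ ≤ (‖X * Δ * Y‖ * ‖Δ‖) * ‖Y‖ := by
        gcongr <;> first | exact norm_mul_le _ _ | positivity
    _ ≤ ((‖X * Δ‖ * ‖Y‖) * ‖Δ‖) * ‖Y‖ := by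
        gcongr <;> first | exact norm_mul_le _ _ | positivity
    _ ≤ (((‖X‖ * ‖Δ‖) * ‖Y‖) * ‖Δ‖) * ‖Y‖ := by
        gcongr <;> first | exact norm_mul_le _ _ | positivity
    _ ≤ (((2 / lam * ‖Δ‖) * (1 / lam)) * ‖Δ‖) * (1 / lam) := by
        gcongr <;> first | exact norm_nonneg _ | positivity | assumption
    _ = 2 * ‖Δ‖ ^ 2 / lam ^ 3 := by field_simp
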